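/- Fix $0<\alpha,\sigma<1$ and $\varepsilon>0$, and assume there is $k\in\mathbb{N}$ with $1-\varepsilon<k\alpha<1$. For $n\ge0$ let $d_n=\lfloor1/(\sigma\alpha^n)\rfloor$ and $\mathcal I_n$ the partition of $[0,d_n\sigma\alpha^n]$ into $d_n$ intervals of length $\sigma\alpha^n$. Let $\{A_n\}_{n\ge0}$ be subsets of $[0,1]$ such that $A_n$ is a union of intervals from $\mathcal I_{n+1}$ and, for every interval $I_n\in\mathcal I_n$, the set $A_n\cap I_n$ is the union of exactly $k$ intervals of $\mathcal I_{n+1}$. Then for Lebesgue almost every $s\in[0,1]$, $\lim_{n\to\infty}\frac1n\#\{0\le j\le n-1: s\in A_j\}=k\alpha>1-\varepsilon$. -/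

import Mathlib

open MeasureTheory Filter
open scoped ENNReal

/-- The `i`-th interval of the partition `𝓘ₙ` of `[0, dₙσαⁿ]` into intervals of
length `σαⁿ`. -/
def partInt (σ α : ℝ) (n i : ℕ) : Set ℝ :=
  Set.Ico ((i : ℝ) * (σ * α ^ n)) (((i : ℝ) + 1) * (σ * α ^ n))

lemma volume_partInt {σ α : ℝ} {n : ℕ} (hc : 0 ≤ σ * α ^ n) (i : ℕ) :
    volume (partInt σ α n i) = ENNReal.ofReal (σ * α ^ n) := by
  rw [partInt, Real.volume_Ico]
  congr 1; ring

lemma partInt_disjoint {σ α : ℝ} {n : ℕ} (hc : 0 ≤ σ * α ^ n) {i j : ℕ} (hij : i ≠ j) :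
    Disjoint (partInt σ α n i) (partInt σ α n j) := by
  rcases lt_or_gt_of_ne hij with h | h
  · exact Set.Ico_disjoint_Ico.2 (by
      apply min_le_of_left_le
      refine le_max_of_le_right ?_
      have : (i : ℝ) + 1 ≤ j := by exact_mod_cast h
      nlinarith)
  · exact Set.Ico_disjoint_Ico.2 (by
      apply min_le_of_right_le
      refine le_max_of_le_left ?_
      have : (j : ℝ) + 1 ≤ i := by exact_mod_cast h
      nlinarith)

lemma volume_biUnion_partInt {σ α : ℝ} {n : ℕ} (hc : 0 ≤ σ * α ^ n) (S : Finset ℕ) :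
    volume (⋃ i ∈ S, partInt σ α n i) = S.card * ENNReal.ofReal (σ * α ^ n) := by
  rw [measure_biUnion_finset (fun i _ j _ hij => partInt_disjoint hc hij)
    (fun i _ => measurableSet_Ico)]
  simp [volume_partInt hc]

lemma Ico_eq_biUnion_partInt {σ α : ℝ} {n : ℕ} (hc : 0 ≤ σ * α ^ n) (d : ℕ) :
    Set.Ico (0 : ℝ) ((d : ℝ) * (σ * α ^ n)) = ⋃ j ∈ Finset.range d, partInt σ α n j := by
  induction d with
  | zero => simp
  | succ d ih =>
    rw [Finset.range_add_one]
    simp only [Finset.mem_insert, Set.iUnion_iUnion_eq_or_left]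
    rw [← ih, Set.union_comm, partInt]
    rw [Set.Ico_union_Ico_eq_Ico]
    · push_cast; ring_nf
    · positivity
    · push_cast
      nlinarith [hc]

lemma geom_sum_le_div {a : ℝ} (h0 : 0 ≤ a) (h1 : a < 1) (n : ℕ) :
    ∑ t ∈ Finset.range n, a ^ t ≤ 1 / (1 - a) := by
  rw [geom_sum_eq (ne_of_lt h1)]
  have heq : (a ^ n - 1) / (a - 1) = (1 - a ^ n) / (1 - a) := by
    rw [div_eq_div_iff (by linarith) (by linarith)]; ring
  rw [heq, div_le_div_iff₀ (by linarith) (by linarith)]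
  nlinarith [pow_nonneg h0 n]

lemma abs_geom_row_sum {a : ℝ} (h0 : 0 ≤ a) (h1 : a < 1) (i n : ℕ) :
    ∑ j ∈ Finset.range n, a ^ (max i j - min i j) ≤ 2 / (1 - a) := by
  classical
  have key : ∀ j ∈ Finset.range n, a ^ (max i j - min i j)
      = (if j ≤ i then a ^ (i - j) else a ^ (j - i)) := by
    intro j _
    split_ifs with h
    · rw [max_eq_left h, min_eq_right h]
    · push_neg at h
      rw [max_eq_right h.le, min_eq_left h.le]
  rw [Finset.sum_congr rfl key, Finset.sum_ite]
  have hb1 : ∑ j ∈ (Finset.range n).filter (fun j => j ≤ i), a ^ (i - j)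
      ≤ 1 / (1 - a) := by
    have hsub : (Finset.range n).filter (fun j => j ≤ i) ⊆ Finset.range (i + 1) :=
      fun j hj => Finset.mem_range.2 (Nat.lt_succ_of_le (Finset.mem_filter.1 hj).2)
    have h1' := Finset.sum_le_sum_of_subset_of_nonneg (f := fun j => a ^ (i - j)) hsub
      (fun j _ _ => pow_nonneg h0 _)
    refine h1'.trans ?_
    calc ∑ j ∈ Finset.range (i + 1), a ^ (i - j)
        = ∑ j ∈ Finset.range (i + 1), a ^ j := by
          rw [← Finset.sum_range_reflect]
          refine Finset.sum_congr rfl fun j hj => ?_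
          congr 1
          have := Finset.mem_range.1 hj
          omega
      _ ≤ 1 / (1 - a) := geom_sum_le_div h0 h1 _
  have hb2 : ∑ j ∈ (Finset.range n).filter (fun j => ¬ j ≤ i), a ^ (j - i)
      ≤ 1 / (1 - a) := by
    have hsub : (Finset.range n).filter (fun j => ¬ j ≤ i) ⊆ Finset.Ico (i + 1) n := by
      intro j hj
      have := Finset.mem_filter.1 hj
      exact Finset.mem_Ico.2 ⟨by omega, Finset.mem_range.1 this.1⟩
    have h1' := Finset.sum_le_sum_of_subset_of_nonneg (f := fun j => a ^ (j - i)) hsub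
      (fun j _ _ => pow_nonneg h0 _)
    refine h1'.trans ?_
    calc ∑ j ∈ Finset.Ico (i+1) n, a ^ (j - i)
        = ∑ t ∈ Finset.range (n - (i+1)), a ^ (i + 1 + t - i) := by
          rw [Finset.sum_Ico_eq_sum_range]
      _ ≤ ∑ t ∈ Finset.range (n - (i+1)), a ^ t := by
          refine Finset.sum_le_sum fun t _ => ?_
          have ht : i + 1 + t - i = t + 1 := by omega
          rw [ht]
          exact pow_le_pow_of_le_one h0 h1.le (by omega)
      _ ≤ 1 / (1 - a) := geom_sum_le_div h0 h1 _
  have htwo : (2:ℝ) / (1 - a) = 1/(1-a) + 1/(1-a) := by ring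
  rw [htwo]
  exact add_le_add hb1 hb2

/-- Interpolation from squares to all indices. -/
lemma tendsto_div_of_squares (S : ℕ → ℝ)
    (hstep : ∀ n, |S (n + 1) - S n| ≤ 1)
    (h : Tendsto (fun N : ℕ => S ((N + 1) ^ 2) / (((N:ℝ) + 1) ^ 2)) atTop (nhds 0)) :
    Tendsto (fun n : ℕ => S n / n) atTop (nhds 0) := by
  have hdiff : ∀ b t : ℕ, |S (b + t) - S b| ≤ t := by
    intro b t
    induction t with
    | zero => simp
    | succ t ih =>
      have h1 := hstep (b + t)
      calc |S (b + t + 1) - S b| ≤ |S (b + t + 1) - S (b + t)| + |S (b + t) - S b| :=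
            abs_sub_le _ _ _
        _ ≤ 1 + t := add_le_add h1 ih
        _ = ((t + 1 : ℕ) : ℝ) := by push_cast; ring
  set v : ℕ → ℝ := fun N => |S (N * N)| / ((N:ℝ) * N) + 2 / N with hv
  have hvten : Tendsto v atTop (nhds 0) := by
    have h1 : Tendsto (fun N : ℕ => |S ((N+1)^2)| / (((N:ℝ)+1)^2)) atTop (nhds 0) := by
      have := h.abs
      rw [abs_zero] at this
      refine this.congr fun N => ?_
      rw [abs_div, abs_of_nonneg (by positivity : (0:ℝ) ≤ ((N:ℝ)+1)^2)]
    have h2 : Tendsto (fun N : ℕ => (2:ℝ) / (N + 1)) atTop (nhds 0) := by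
      simpa [div_eq_mul_inv] using (tendsto_one_div_add_atTop_nhds_zero_nat (𝕜 := ℝ)).const_mul 2
    have h3 : Tendsto (fun N : ℕ => v (N + 1)) atTop (nhds 0) := by
      have h4 := h1.add h2
      rw [add_zero] at h4
      refine h4.congr fun N => ?_
      show _ = v (N + 1)
      simp only [hv]
      push_cast
      ring_nf
    exact (tendsto_add_atTop_iff_nat 1).1 h3
  have hbound : ∀ n : ℕ, 1 ≤ n → |S n / n| ≤ v (Nat.sqrt n) := by
    intro n hn
    obtain ⟨N, hN⟩ : ∃ N, Nat.sqrt n = N := ⟨_, rfl⟩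
    rw [hN]
    have hN1 : 1 ≤ N := by
      rw [← hN, Nat.le_sqrt]; omega
    have hle : N * N ≤ n := hN ▸ Nat.sqrt_le n
    have hlt : n < (N+1) * (N+1) := hN ▸ Nat.lt_succ_sqrt n
    have h1 : |S n - S (N * N)| ≤ ((n - N * N : ℕ) : ℝ) := by
      have := hdiff (N * N) (n - N * N)
      rwa [Nat.add_sub_cancel' hle] at this
    have h2 : ((n - N * N : ℕ) : ℝ) ≤ 2 * N := by
      have hexp : (N+1) * (N+1) = N*N + 2*N + 1 := by ring
      have hnat : n - N * N ≤ 2 * N := by omega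
      calc ((n - N * N : ℕ) : ℝ) ≤ ((2 * N : ℕ) : ℝ) := Nat.cast_le.2 hnat
        _ = 2 * N := by push_cast; ring
    have hSn : |S n| ≤ |S (N * N)| + 2 * N := by
      have hrw : S n = S (N * N) + (S n - S (N * N)) := by ring
      rw [hrw]
      refine (abs_add_le _ _).trans ?_
      linarith [h1.trans h2]
    have hNpos : (0:ℝ) < (N:ℝ) := by exact_mod_cast hN1
    have hn2 : (N:ℝ) * N ≤ (n:ℝ) := by exact_mod_cast hle
    have hnpos : (0:ℝ) < n := by exact_mod_cast hn
    rw [abs_div, abs_of_nonneg hnpos.le]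
    have hstep2 : |S n| / (n:ℝ) ≤ (|S (N * N)| + 2 * N) / ((N:ℝ) * N) :=
      div_le_div₀ (by positivity) hSn (by positivity) hn2
    refine hstep2.trans ?_
    rw [hv]
    simp only []
    rw [add_div]
    apply add_le_add le_rfl
    rw [div_le_div_iff₀ (by positivity) hNpos]
    nlinarith
  have hsq : Tendsto (fun n : ℕ => v (Nat.sqrt n)) atTop (nhds 0) := by
    refine hvten.comp ?_
    exact tendsto_atTop_atTop.2 fun b => ⟨b * b, fun n hn => Nat.le_sqrt.2 hn⟩
  refine squeeze_zero_norm' ?_ hsq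
  filter_upwards [eventually_ge_atTop 1] with n hn
  exact hbound n hn

lemma slln_aux {Ω : Type*} [MeasurableSpace Ω] (μ : Measure Ω) [IsProbabilityMeasure μ]
    (A : ℕ → Set Ω) (meas : ∀ n, MeasurableSet (A n))
    (m : ℕ → ℝ) (hm0 : ∀ n, 0 ≤ m n) (hm1 : ∀ n, m n ≤ 1)
    (hμA : ∀ n, (μ (A n)).toReal = m n)
    (C a : ℝ) (ha0 : 0 < a) (ha1 : a < 1) (hC : 1 ≤ C)
    (hcov : ∀ i j, i < j → |(μ (A i ∩ A j)).toReal - m i * m j| ≤ C * a ^ (j - i)) :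
    ∀ᵐ s ∂μ, Tendsto
      (fun n : ℕ => (∑ j ∈ Finset.range n, ((A j).indicator (1 : Ω → ℝ) s - m j)) / n)
      atTop (nhds 0) := by
  classical
  set X : ℕ → Ω → ℝ := fun j => (A j).indicator (1 : Ω → ℝ) with hX
  set Y : ℕ → Ω → ℝ := fun j s => X j s - m j with hY
  have hXval : ∀ j s, X j s = if s ∈ A j then 1 else 0 := by
    intro j s; simp [hX, Set.indicator_apply]
  have hYb : ∀ j s, |Y j s| ≤ 1 := by
    intro j s
    rw [hY]; simp only [hXval]
    split_ifs with h
    · rw [abs_le]; constructor <;> [linarith [hm1 j]; linarith [hm0 j]]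
    · rw [abs_le]; constructor <;> [linarith [hm1 j]; linarith [hm0 j]]
  have hXmeas : ∀ j, Measurable (X j) := fun j => measurable_one.indicator (meas j)
  have hYmeas : ∀ j, Measurable (Y j) := fun j => (hXmeas j).sub measurable_const
  have hXint : ∀ j, Integrable (X j) μ := by
    intro j
    rw [hX, integrable_indicator_iff (meas j)]
    exact integrableOn_const (measure_ne_top μ _)
  have hEX : ∀ j, ∫ s, X j s ∂μ = m j := by
    intro j
    rw [← hμA j]
    exact integral_indicator_one (meas j)
  have hYint : ∀ j, Integrable (Y j) μ := fun j => (hXint j).sub (integrable_const _)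
  -- product integrals
  have hXXfun : ∀ i j, (fun s => X i s * X j s) = (A i ∩ A j).indicator (1 : Ω → ℝ) := by
    intro i j
    funext s
    rw [Set.inter_indicator_one]
    rfl
  have hXXint : ∀ i j, Integrable (fun s => X i s * X j s) μ := by
    intro i j
    rw [hXXfun i j, integrable_indicator_iff ((meas i).inter (meas j))]
    exact integrableOn_const (measure_ne_top μ _)
  have hEXX : ∀ i j, ∫ s, X i s * X j s ∂μ = (μ (A i ∩ A j)).toReal := by
    intro i j
    rw [hXXfun i j]
    exact integral_indicator_one ((meas i).inter (meas j))
  have hYYint : ∀ i j, Integrable (fun s => Y i s * Y j s) μ := by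
    intro i j
    exact (hYint j).bdd_mul (hYmeas i).aestronglyMeasurable
      (Filter.Eventually.of_forall fun s => by rw [Real.norm_eq_abs]; exact hYb i s)
  have hEYY : ∀ i j, ∫ s, Y i s * Y j s ∂μ = (μ (A i ∩ A j)).toReal - m i * m j := by
    intro i j
    have hfun : (fun s => Y i s * Y j s)
        = fun s => (X i s * X j s - m i * X j s) - (m j * X i s - m i * m j) := by
      funext s; rw [hY]; ring
    have I2 : Integrable (fun s => m i * X j s) μ := (hXint j).const_mul _
    have I3 : Integrable (fun s => m j * X i s) μ := (hXint i).const_mul _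
    have I12 : Integrable (fun s => X i s * X j s - m i * X j s) μ := (hXXint i j).sub I2
    have I34 : Integrable (fun s => m j * X i s - m i * m j) μ := I3.sub (integrable_const _)
    rw [hfun]
    rw [integral_sub I12 I34, integral_sub (hXXint i j) I2,
      integral_sub I3 (integrable_const _),
      integral_const_mul, integral_const_mul, hEXX, hEX, hEX, integral_const]
    simp [measure_univ]
    ring
  -- covariance bound
  have hcovb : ∀ i j, |(μ (A i ∩ A j)).toReal - m i * m j| ≤ C * a ^ (max i j - min i j) := by
    intro i j
    rcases lt_trichotomy i j with h | h | h
    · rw [max_eq_right h.le, min_eq_left h.le]; exact hcov i j h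
    · subst h
      simp only [max_self, min_self, Nat.sub_self, pow_zero, mul_one, Set.inter_self]
      rw [hμA i]
      rw [abs_le]
      constructor
      · nlinarith [hm0 i, hm1 i]
      · nlinarith [hm0 i, hm1 i]
    · rw [max_eq_left h.le, min_eq_right h.le, Set.inter_comm, mul_comm]
      exact hcov j i h
  -- partial sums
  set Sn : ℕ → Ω → ℝ := fun n s => ∑ j ∈ Finset.range n, Y j s with hSn
  have hSmeas : ∀ n, Measurable (Sn n) := by
    intro n
    apply Finset.measurable_sum
    exact fun j _ => hYmeas j
  have hSsq : ∀ n, (fun s => (Sn n s)^2)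
      = fun s => ∑ i ∈ Finset.range n, ∑ j ∈ Finset.range n, Y i s * Y j s := by
    intro n
    funext s
    rw [hSn]
    simp only [pow_two]
    rw [Finset.sum_mul_sum]
  have hSint : ∀ n, Integrable (fun s => (Sn n s)^2) μ := by
    intro n
    rw [hSsq n]
    exact integrable_finset_sum _ (fun i _ => integrable_finset_sum _ (fun j _ => hYYint i j))
  set K : ℝ := 2 * C / (1 - a) with hK
  have hKpos : 0 < K := by
    rw [hK]
    apply div_pos <;> linarith
  have hvar : ∀ n : ℕ, ∫ s, (Sn n s)^2 ∂μ ≤ K * n := by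
    intro n
    rw [hSsq n]
    rw [integral_finset_sum _ (fun i _ => integrable_finset_sum _ (fun j _ => hYYint i j))]
    have hrow : ∀ i ∈ Finset.range n,
        (∫ s, ∑ j ∈ Finset.range n, Y i s * Y j s ∂μ) ≤ K := by
      intro i _
      rw [integral_finset_sum _ (fun j _ => hYYint i j)]
      calc ∑ j ∈ Finset.range n, ∫ s, Y i s * Y j s ∂μ
          ≤ ∑ j ∈ Finset.range n, C * a ^ (max i j - min i j) := by
            refine Finset.sum_le_sum fun j _ => ?_
            rw [hEYY i j]
            exact (le_abs_self _).trans (hcovb i j)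
        _ = C * ∑ j ∈ Finset.range n, a ^ (max i j - min i j) := by
            rw [Finset.mul_sum]
        _ ≤ C * (2 / (1 - a)) := by
            refine mul_le_mul_of_nonneg_left ?_ (by linarith)
            exact abs_geom_row_sum ha0.le ha1 i n
        _ = K := by rw [hK]; ring
    calc ∑ i ∈ Finset.range n, ∫ s, ∑ j ∈ Finset.range n, Y i s * Y j s ∂μ
        ≤ ∑ _i ∈ Finset.range n, K := Finset.sum_le_sum hrow
      _ = K * n := by rw [Finset.sum_const, Finset.card_range]; ring
  -- normalized partial sums along squares
  set T : ℕ → Ω → ℝ := fun N s => Sn ((N + 1) ^ 2) s / (((N:ℝ) + 1) ^ 2) with hT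
  have hTmeas : ∀ N, Measurable (T N) := fun N => (hSmeas _).div_const _
  have hT2eq : ∀ N, (fun s => (T N s)^2)
      = fun s => (1 / (((N:ℝ) + 1) ^ 2)) ^ 2 * (Sn ((N + 1) ^ 2) s)^2 := by
    intro N
    funext s
    simp only [hT]
    rw [div_pow, one_div, inv_pow, div_eq_mul_inv, mul_comm]
  have hT2int : ∀ N, Integrable (fun s => (T N s)^2) μ := by
    intro N
    rw [hT2eq N]
    exact (hSint _).const_mul _
  have hET : ∀ N, ∫ s, (T N s)^2 ∂μ ≤ K / (((N:ℝ) + 1) ^ 2) := by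
    intro N
    rw [hT2eq N, integral_const_mul]
    have hb := hvar ((N + 1) ^ 2)
    have hcast : ((((N + 1) ^ 2 : ℕ)) : ℝ) = (((N:ℝ) + 1) ^ 2) := by push_cast; ring
    rw [hcast] at hb
    calc (1 / (((N:ℝ) + 1) ^ 2)) ^ 2 * ∫ s, (Sn ((N+1)^2) s)^2 ∂μ
        ≤ (1 / (((N:ℝ) + 1) ^ 2)) ^ 2 * (K * (((N:ℝ) + 1) ^ 2)) :=
          mul_le_mul_of_nonneg_left hb (by positivity)
      _ = K / (((N:ℝ) + 1) ^ 2) := by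
          have hpos : (0:ℝ) < ((N:ℝ) + 1) ^ 2 := by positivity
          field_simp
  have hsumR : Summable (fun N : ℕ => K / (((N:ℝ) + 1) ^ 2)) := by
    have base : Summable (fun N : ℕ => 1 / ((N:ℝ)) ^ 2) := by
      rw [Real.summable_one_div_nat_pow]
      norm_num
    have base2 : Summable (fun N : ℕ => 1 / (((N:ℝ) + 1) ^ 2)) := by
      have h1 := (summable_nat_add_iff 1).2 base
      refine h1.congr fun N => ?_
      push_cast
      ring
    have heq : (fun N : ℕ => K / (((N:ℝ) + 1) ^ 2))
        = fun N : ℕ => K * (1 / (((N:ℝ) + 1) ^ 2)) := funext fun N => by ring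
    rw [heq]
    exact base2.mul_left K
  have hofReal : ENNReal.ofReal (∑' N : ℕ, K / (((N:ℝ) + 1) ^ 2))
      = ∑' N : ℕ, ENNReal.ofReal (K / (((N:ℝ) + 1) ^ 2)) :=
    ENNReal.ofReal_tsum_of_nonneg (fun N => by positivity) hsumR
  have hT2m : ∀ N, Measurable (fun s => ENNReal.ofReal ((T N s)^2)) :=
    fun N => ENNReal.measurable_ofReal.comp ((hTmeas N).pow_const 2)
  have htop : ∫⁻ s, ∑' N, ENNReal.ofReal ((T N s)^2) ∂μ ≠ ⊤ := by
    rw [lintegral_tsum (fun N => (hT2m N).aemeasurable)]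
    have hle : ∑' N, ∫⁻ s, ENNReal.ofReal ((T N s)^2) ∂μ
        ≤ ∑' N : ℕ, ENNReal.ofReal (K / (((N:ℝ) + 1) ^ 2)) := by
      refine ENNReal.tsum_le_tsum fun N => ?_
      rw [← ofReal_integral_eq_lintegral_ofReal (hT2int N)
        (Filter.Eventually.of_forall fun s => sq_nonneg _)]
      exact ENNReal.ofReal_le_ofReal (hET N)
    exact ne_top_of_le_ne_top (by rw [← hofReal]; exact ENNReal.ofReal_ne_top) hle
  have hmeas_tsum : Measurable fun s => ∑' N, ENNReal.ofReal ((T N s)^2) :=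
    Measurable.ennreal_tsum hT2m
  have hae := ae_lt_top hmeas_tsum htop
  filter_upwards [hae] with s hs
  have hsum_s : Summable (fun N => (T N s)^2) := by
    have h1 := ENNReal.summable_toReal hs.ne
    refine h1.congr fun N => ?_
    rw [ENNReal.toReal_ofReal (sq_nonneg _)]
  have hT0 : Tendsto (fun N => T N s) atTop (nhds 0) := by
    have h2 : Tendsto (fun N => (T N s)^2) atTop (nhds 0) := hsum_s.tendsto_atTop_zero
    have h3 : Tendsto (fun N => Real.sqrt ((T N s)^2)) atTop (nhds 0) := by
      have h4 := (Real.continuous_sqrt.tendsto 0).comp h2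
      rwa [Real.sqrt_zero] at h4
    refine squeeze_zero_norm (fun N => ?_) h3
    rw [Real.norm_eq_abs, Real.sqrt_sq_eq_abs]
  simp only [hT] at hT0
  have hstep : ∀ n, |(fun n => Sn n s) (n + 1) - (fun n => Sn n s) n| ≤ 1 := by
    intro n
    have heq : Sn (n+1) s - Sn n s = Y n s := by
      simp only [hSn, Finset.sum_range_succ]
      ring
    simp only []
    rw [heq]
    exact hYb n s
  have hfinal := tendsto_div_of_squares (fun n => Sn n s) hstep hT0
  simp only [hSn, hY, hX] at hfinal
  exact hfinal
set_option maxHeartbeats 1000000 in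
/-- Fix `0 < α, σ < 1`, `ε > 0` and `k ∈ ℕ` with `1-ε < kα < 1`.
Let `Aₙ ⊆ [0,1]` be sets such that `Aₙ` is contained in `[0, dₙσαⁿ]` and, within each
interval of `𝓘ₙ`, `Aₙ` is the union of exactly `k` intervals of `𝓘ₙ₊₁`. Then for
Lebesgue-a.e. `s ∈ [0,1]`, the frequency `(1/n)·#{0 ≤ j ≤ n-1 : s ∈ A_j}` tends to
`kα > 1-ε`. -/
theorem stmt_17 (α σ ε : ℝ) (hα : α ∈ Set.Ioo (0 : ℝ) 1) (hσ : σ ∈ Set.Ioo (0 : ℝ) 1)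
    (hε : 0 < ε) (k : ℕ) (hk : 1 - ε < (k : ℝ) * α) (hk1 : (k : ℝ) * α < 1)
    (d : ℕ → ℕ) (hd : ∀ n, d n = Nat.floor (1 / (σ * α ^ n)))
    (A : ℕ → Set ℝ)
    (hA_sub : ∀ n, A n ⊆ Set.Ico (0 : ℝ) ((d n : ℝ) * (σ * α ^ n)))
    (hA_struct : ∀ n : ℕ, ∀ j : ℕ, j < d n →
      ∃ S : Finset ℕ, S.card = k ∧ (∀ i ∈ S, partInt σ α (n + 1) i ⊆ partInt σ α n j) ∧
        A n ∩ partInt σ α n j = ⋃ i ∈ S, partInt σ α (n + 1) i) :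
    ∀ᵐ s ∂(volume.restrict (Set.Icc (0 : ℝ) 1)),
      Tendsto (fun n : ℕ => (Set.ncard {j : ℕ | j < n ∧ s ∈ A j} : ℝ) / n) atTop
        (nhds ((k : ℝ) * α)) := by
  classical
  obtain ⟨hα0, hα1⟩ := hα
  obtain ⟨hσ0, hσ1⟩ := hσ
  have hc : ∀ n : ℕ, 0 < σ * α ^ n := fun n => by positivity
  have hkα0 : 0 ≤ (k:ℝ) * α := by positivity
  have hd1 : ∀ n, (d n : ℝ) * (σ * α ^ n) ≤ 1 := by
    intro n
    rw [hd n]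
    have h1 : (Nat.floor (1 / (σ * α ^ n)) : ℝ) ≤ 1 / (σ * α ^ n) :=
      Nat.floor_le (by positivity)
    rw [← le_div_iff₀ (hc n)]
    exact h1
  have hd2 : ∀ n, 1 - σ * α ^ n < (d n : ℝ) * (σ * α ^ n) := by
    intro n
    rw [hd n]
    have h1 : 1 / (σ * α ^ n) < (Nat.floor (1 / (σ * α ^ n)) : ℝ) + 1 :=
      Nat.lt_floor_add_one _
    have h2 := (div_lt_iff₀ (hc n)).1 h1
    nlinarith [hc n]
  have hsplit : ∀ q j : ℕ, j ≤ d q →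
      A q ∩ Set.Ico 0 ((j:ℝ) * (σ * α ^ q))
        = ⋃ i ∈ Finset.range j, (A q ∩ partInt σ α q i) := by
    intro q j hj
    rw [Ico_eq_biUnion_partInt (hc q).le j, Set.inter_iUnion₂]
  have hAeq : ∀ q : ℕ, A q = A q ∩ Set.Ico 0 ((d q : ℝ) * (σ * α ^ q)) :=
    fun q => (Set.inter_eq_left.2 (hA_sub q)).symm
  have meas_piece : ∀ q i : ℕ, i < d q → MeasurableSet (A q ∩ partInt σ α q i) := by
    intro q i hi
    obtain ⟨S, hcard, hsub, heq⟩ := hA_struct q i hi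
    rw [heq]
    exact S.measurableSet_biUnion (fun b _ => measurableSet_Ico)
  have vol_piece : ∀ q i : ℕ, i < d q →
      volume (A q ∩ partInt σ α q i) = (k:ℝ≥0∞) * ENNReal.ofReal (σ * α ^ (q+1)) := by
    intro q i hi
    obtain ⟨S, hcard, hsub, heq⟩ := hA_struct q i hi
    rw [heq, volume_biUnion_partInt (hc (q+1)).le, hcard]
  have measA : ∀ q, MeasurableSet (A q) := by
    intro q
    rw [hAeq q, hsplit q (d q) le_rfl]
    exact (Finset.range (d q)).measurableSet_biUnion
      (fun i hi => meas_piece q i (Finset.mem_range.1 hi))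
  have volA_cap : ∀ q j : ℕ, j ≤ d q →
      volume (A q ∩ Set.Ico 0 ((j:ℝ) * (σ * α ^ q)))
        = (j:ℝ≥0∞) * ((k:ℝ≥0∞) * ENNReal.ofReal (σ * α ^ (q+1))) := by
    intro q j hj
    rw [hsplit q j hj]
    rw [measure_biUnion_finset
      (fun i _ i' _ hne => Set.disjoint_of_subset Set.inter_subset_right
        Set.inter_subset_right (partInt_disjoint (hc q).le hne))
      (fun i hi => meas_piece q i (lt_of_lt_of_le (Finset.mem_range.1 hi) hj))]
    rw [Finset.sum_congr rfl (fun i hi =>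
      vol_piece q i (lt_of_lt_of_le (Finset.mem_range.1 hi) hj))]
    rw [Finset.sum_const, Finset.card_range, nsmul_eq_mul]
  have volA : ∀ q, volume (A q)
      = (d q : ℝ≥0∞) * ((k:ℝ≥0∞) * ENNReal.ofReal (σ * α ^ (q+1))) := by
    intro q
    rw [hAeq q]
    exact volA_cap q (d q) le_rfl
  set mA : ℕ → ℝ := fun n => (d n : ℝ) * ((k:ℝ) * (σ * α ^ (n+1))) with hmA
  have hmAvol : ∀ n, (volume (A n)).toReal = mA n := by
    intro n
    rw [volA n, hmA]
    rw [ENNReal.toReal_mul, ENNReal.toReal_mul, ENNReal.toReal_natCast,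
      ENNReal.toReal_natCast, ENNReal.toReal_ofReal (hc (n+1)).le]
  have hmAkα : ∀ n, mA n = ((k:ℝ) * α) * ((d n : ℝ) * (σ * α ^ n)) := by
    intro n
    rw [hmA]
    simp only []
    rw [pow_succ]
    ring
  have hmA0 : ∀ n, 0 ≤ mA n := fun n => by rw [hmA]; positivity
  have hmA1 : ∀ n, mA n ≤ (k:ℝ) * α := by
    intro n
    rw [hmAkα n]
    nlinarith [hd1 n, hd2 n, hc n]
  have hmA2 : ∀ n, (k:ℝ) * α - mA n ≤ σ * α ^ n := by
    intro n
    rw [hmAkα n]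
    nlinarith [hd2 n, hc n]
  have hfin : ∀ (B : Set ℝ) (x y : ℝ), B ⊆ Set.Ico x y → volume B ≠ ⊤ := by
    intro B x y hB
    exact ne_top_of_le_ne_top (by rw [Real.volume_Ico]; exact ENNReal.ofReal_ne_top)
      (measure_mono hB)
  -- key estimate: measure of A q in initial segments
  have keyG : ∀ (q : ℕ) (x : ℝ), 0 ≤ x → x ≤ 1 →
      |(volume (A q ∩ Set.Ico 0 x)).toReal - (k:ℝ) * α * x| ≤ σ * α ^ q := by
    intro q x hx0 hx1
    by_cases hcase : x ≤ (d q : ℝ) * (σ * α ^ q)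
    · set j : ℕ := Nat.floor (x / (σ * α ^ q)) with hjdef
      have hj1 : (j:ℝ) * (σ * α ^ q) ≤ x :=
        (le_div_iff₀ (hc q)).1 (Nat.floor_le (by positivity))
      have hj2 : x < ((j:ℝ) + 1) * (σ * α ^ q) :=
        (div_lt_iff₀ (hc q)).1 (Nat.lt_floor_add_one _)
      have hjd : j ≤ d q := by
        rw [hjdef]
        have hxc : x / (σ * α ^ q) ≤ (d q : ℝ) := by
          rw [div_le_iff₀ (hc q)]; exact hcase
        calc Nat.floor (x / (σ * α ^ q)) ≤ Nat.floor ((d q : ℝ)) := Nat.floor_mono hxc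
          _ = d q := Nat.floor_natCast _
      have hsp : A q ∩ Set.Ico 0 x
          = (A q ∩ Set.Ico 0 ((j:ℝ) * (σ * α ^ q)))
            ∪ (A q ∩ Set.Ico ((j:ℝ) * (σ * α ^ q)) x) := by
        rw [← Set.inter_union_distrib_left, Set.Ico_union_Ico_eq_Ico (by positivity) hj1]
      have hdisj : Disjoint (A q ∩ Set.Ico 0 ((j:ℝ) * (σ * α ^ q)))
          (A q ∩ Set.Ico ((j:ℝ) * (σ * α ^ q)) x) :=
        Set.disjoint_of_subset Set.inter_subset_right Set.inter_subset_right
          (Set.Ico_disjoint_Ico.2 (min_le_of_left_le (le_max_right _ _)))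
      have htr : (volume (A q ∩ Set.Ico 0 x)).toReal
          = (volume (A q ∩ Set.Ico 0 ((j:ℝ) * (σ * α ^ q)))).toReal
            + (volume (A q ∩ Set.Ico ((j:ℝ) * (σ * α ^ q)) x)).toReal := by
        rw [hsp, measure_union hdisj ((measA q).inter measurableSet_Ico),
          ENNReal.toReal_add (hfin _ _ _ Set.inter_subset_right)
            (hfin _ _ _ Set.inter_subset_right)]
      have hv1 : (volume (A q ∩ Set.Ico 0 ((j:ℝ) * (σ * α ^ q)))).toReal
          = (j:ℝ) * ((k:ℝ) * (σ * α ^ (q+1))) := by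
        rw [volA_cap q j hjd, ENNReal.toReal_mul, ENNReal.toReal_mul,
          ENNReal.toReal_natCast, ENNReal.toReal_natCast,
          ENNReal.toReal_ofReal (hc (q+1)).le]
      have hr0 : 0 ≤ (volume (A q ∩ Set.Ico ((j:ℝ) * (σ * α ^ q)) x)).toReal :=
        ENNReal.toReal_nonneg
      have hr1 : (volume (A q ∩ Set.Ico ((j:ℝ) * (σ * α ^ q)) x)).toReal
          ≤ x - (j:ℝ) * (σ * α ^ q) := by
        have hle : volume (A q ∩ Set.Ico ((j:ℝ) * (σ * α ^ q)) x)
            ≤ volume (Set.Ico ((j:ℝ) * (σ * α ^ q)) x) :=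
          measure_mono Set.inter_subset_right
        rw [Real.volume_Ico] at hle
        calc (volume (A q ∩ Set.Ico ((j:ℝ) * (σ * α ^ q)) x)).toReal
            ≤ (ENNReal.ofReal (x - (j:ℝ) * (σ * α ^ q))).toReal :=
              ENNReal.toReal_mono ENNReal.ofReal_ne_top hle
          _ = x - (j:ℝ) * (σ * α ^ q) := ENNReal.toReal_ofReal (by linarith)
      rw [htr, hv1]
      have hkc : (k:ℝ) * (σ * α ^ (q+1)) = ((k:ℝ) * α) * (σ * α ^ q) := by
        rw [pow_succ]; ring
      have h5 : ((k:ℝ) * α) * (x - (j:ℝ) * (σ * α ^ q)) ≤ x - (j:ℝ) * (σ * α ^ q) := by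
        nlinarith
      have h6 : 0 ≤ ((k:ℝ) * α) * (x - (j:ℝ) * (σ * α ^ q)) := by
        apply mul_nonneg hkα0; linarith
      rw [abs_le]
      constructor
      · nlinarith
      · nlinarith
    · push_neg at hcase
      have hxA : A q ∩ Set.Ico 0 x = A q := Set.inter_eq_left.2
        ((hA_sub q).trans (Set.Ico_subset_Ico le_rfl hcase.le))
      rw [hxA, hmAvol q, hmAkα q, abs_le]
      constructor
      · nlinarith [hd1 q, hd2 q, hc q]
      · nlinarith [hd1 q, hd2 q, hc q]
  have keyH : ∀ (q : ℕ) (a b : ℝ), 0 ≤ a → a ≤ b → b ≤ 1 →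
      |(volume (A q ∩ Set.Ico a b)).toReal - (k:ℝ) * α * (b - a)| ≤ 2 * (σ * α ^ q) := by
    intro q a b ha hab hb1
    have hsp : A q ∩ Set.Ico 0 b = (A q ∩ Set.Ico 0 a) ∪ (A q ∩ Set.Ico a b) := by
      rw [← Set.inter_union_distrib_left, Set.Ico_union_Ico_eq_Ico ha hab]
    have hdisj : Disjoint (A q ∩ Set.Ico 0 a) (A q ∩ Set.Ico a b) :=
      Set.disjoint_of_subset Set.inter_subset_right Set.inter_subset_right
        (Set.Ico_disjoint_Ico.2 (min_le_of_left_le (le_max_right _ _)))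
    have htr : (volume (A q ∩ Set.Ico 0 b)).toReal
        = (volume (A q ∩ Set.Ico 0 a)).toReal + (volume (A q ∩ Set.Ico a b)).toReal := by
      rw [hsp, measure_union hdisj ((measA q).inter measurableSet_Ico),
        ENNReal.toReal_add (hfin _ _ _ Set.inter_subset_right)
          (hfin _ _ _ Set.inter_subset_right)]
    have h2 := keyG q a ha (hab.trans hb1)
    have h3 := keyG q b (ha.trans hab) hb1
    have heq : (volume (A q ∩ Set.Ico a b)).toReal - (k:ℝ) * α * (b - a)
        = ((volume (A q ∩ Set.Ico 0 b)).toReal - (k:ℝ) * α * b)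
          - ((volume (A q ∩ Set.Ico 0 a)).toReal - (k:ℝ) * α * a) := by
      rw [htr]; ring
    rw [heq]
    calc |_ - _| ≤ |(volume (A q ∩ Set.Ico 0 b)).toReal - (k:ℝ) * α * b|
        + |(volume (A q ∩ Set.Ico 0 a)).toReal - (k:ℝ) * α * a| := abs_sub _ _
      _ ≤ 2 * (σ * α ^ q) := by linarith
  -- correlation bound
  have hcorr : ∀ n q : ℕ, n < q →
      |(volume (A n ∩ A q)).toReal - mA n * mA q| ≤ (3/α) * α ^ (q - n) := by
    intro n q hnq
    have hstruct' : ∀ j : ℕ, ∃ S : Finset ℕ, j < d n →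
        S.card = k ∧ (∀ i ∈ S, partInt σ α (n+1) i ⊆ partInt σ α n j) ∧
        A n ∩ partInt σ α n j = ⋃ i ∈ S, partInt σ α (n+1) i := by
      intro j
      by_cases hj : j < d n
      · obtain ⟨S, h1, h2, h3⟩ := hA_struct n j hj
        exact ⟨S, fun _ => ⟨h1, h2, h3⟩⟩
      · exact ⟨∅, fun h => absurd h hj⟩
    choose Sc hSc using hstruct'
    set T : Finset ℕ := (Finset.range (d n)).biUnion Sc with hT
    have hATeq : A n = ⋃ i ∈ T, partInt σ α (n+1) i := by
      rw [hAeq n, hsplit n (d n) le_rfl, hT, Finset.set_biUnion_biUnion]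
      apply Set.iUnion₂_congr
      intro j hj
      exact (hSc j (Finset.mem_range.1 hj)).2.2
    have hTsub : ∀ i ∈ T, partInt σ α (n+1) i ⊆ Set.Ico (0:ℝ) 1 := by
      intro i hi
      obtain ⟨j, hj, hij⟩ := Finset.mem_biUnion.1 hi
      have hj' := Finset.mem_range.1 hj
      refine ((hSc j hj').2.1 i hij).trans ?_
      intro y hy
      obtain ⟨hy0, hy1⟩ := hy
      constructor
      · have hp : 0 ≤ (j:ℝ) * (σ * α ^ n) := by positivity
        linarith
      · have hjn : (j:ℝ) + 1 ≤ (d n : ℝ) := by exact_mod_cast hj'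
        have h1 : ((j:ℝ) + 1) * (σ * α ^ n) ≤ (d n : ℝ) * (σ * α ^ n) := by
          nlinarith [hc n]
        have := hd1 n
        linarith
    have hTb : ∀ i ∈ T, ((i:ℝ) + 1) * (σ * α ^ (n+1)) ≤ 1 := by
      intro i hi
      have h1 := hTsub i hi
      rw [partInt, Set.Ico_subset_Ico_iff
        (by nlinarith [hc (n+1)] : (i:ℝ) * (σ * α ^ (n+1)) < ((i:ℝ)+1) * (σ * α ^ (n+1)))] at h1
      exact h1.2
    have hvolT : volume (A n) = (T.card : ℝ≥0∞) * ENNReal.ofReal (σ * α ^ (n+1)) := by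
      rw [hATeq]
      exact volume_biUnion_partInt (hc (n+1)).le T
    have hTcard : mA n = (T.card : ℝ) * (σ * α ^ (n+1)) := by
      rw [← hmAvol n, hvolT, ENNReal.toReal_mul, ENNReal.toReal_natCast,
        ENNReal.toReal_ofReal (hc (n+1)).le]
    have hsplit2 : A n ∩ A q = ⋃ i ∈ T, (partInt σ α (n+1) i ∩ A q) := by
      conv_lhs => rw [hATeq]
      rw [Set.iUnion₂_inter]
    have hvolsum : (volume (A n ∩ A q)).toReal
        = ∑ i ∈ T, (volume (partInt σ α (n+1) i ∩ A q)).toReal := by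
      rw [hsplit2, measure_biUnion_finset
        (fun i _ i' _ hne => Set.disjoint_of_subset Set.inter_subset_left
          Set.inter_subset_left (partInt_disjoint (hc (n+1)).le hne))
        (fun i _ => measurableSet_Ico.inter (measA q))]
      exact ENNReal.toReal_sum (fun i _ => hfin _ _ _ Set.inter_subset_left)
    have hperi : ∀ i ∈ T,
        |(volume (partInt σ α (n+1) i ∩ A q)).toReal - (k:ℝ) * α * (σ * α ^ (n+1))|
          ≤ 2 * (σ * α ^ q) := by
      intro i hi
      have hb := hTb i hi
      have h1 := keyH q ((i:ℝ) * (σ * α ^ (n+1))) (((i:ℝ)+1) * (σ * α ^ (n+1)))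
        (by positivity) (by nlinarith [hc (n+1)]) hb
      have heq2 : (((i:ℝ)+1) * (σ * α ^ (n+1)) - (i:ℝ) * (σ * α ^ (n+1)))
          = σ * α ^ (n+1) := by ring
      rw [heq2] at h1
      rw [show partInt σ α (n+1) i ∩ A q
          = A q ∩ Set.Ico ((i:ℝ) * (σ * α ^ (n+1))) (((i:ℝ)+1) * (σ * α ^ (n+1))) from by
        rw [partInt, Set.inter_comm]]
      exact h1
    have hsum1 : |(volume (A n ∩ A q)).toReal - (T.card:ℝ) * ((k:ℝ) * α * (σ * α ^ (n+1)))|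
        ≤ (T.card:ℝ) * (2 * (σ * α ^ q)) := by
      rw [hvolsum]
      have he1 : (T.card:ℝ) * ((k:ℝ) * α * (σ * α ^ (n+1)))
          = ∑ _i ∈ T, (k:ℝ) * α * (σ * α ^ (n+1)) := by
        rw [Finset.sum_const, nsmul_eq_mul]
      rw [he1, ← Finset.sum_sub_distrib]
      refine (Finset.abs_sum_le_sum_abs _ _).trans ?_
      have he2 : (T.card:ℝ) * (2 * (σ * α ^ q)) = ∑ _i ∈ T, 2 * (σ * α ^ q) := by
        rw [Finset.sum_const, nsmul_eq_mul]
      rw [he2]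
      exact Finset.sum_le_sum hperi
    have hTcard1 : (T.card : ℝ) * (σ * α ^ (n+1)) ≤ 1 := by
      rw [← hTcard]
      exact le_trans (hmA1 n) hk1.le
    have hpow : σ * α ^ q = (σ * α ^ (n+1)) * α ^ (q-n-1) := by
      rw [mul_assoc, ← pow_add]
      congr 2
      omega
    have hrhs : (T.card:ℝ) * (2 * (σ * α ^ q)) ≤ 2 * α ^ (q-n-1) := by
      rw [hpow]
      calc (T.card:ℝ) * (2 * ((σ * α ^ (n+1)) * α ^ (q-n-1)))
          = ((T.card:ℝ) * (σ * α ^ (n+1))) * (2 * α ^ (q-n-1)) := by ring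
        _ ≤ 1 * (2 * α ^ (q-n-1)) := by
            refine mul_le_mul_of_nonneg_right hTcard1 (by positivity)
        _ = 2 * α ^ (q-n-1) := one_mul _
    have hmid : (T.card:ℝ) * ((k:ℝ) * α * (σ * α ^ (n+1))) = ((k:ℝ) * α) * mA n := by
      rw [hTcard]; ring
    have hq1 : σ * α ^ q ≤ α ^ (q-n-1) := by
      calc σ * α ^ q ≤ α ^ q := by nlinarith [pow_nonneg hα0.le q]
        _ ≤ α ^ (q-n-1) := pow_le_pow_of_le_one hα0.le hα1.le (by omega)
    have h2b : |((k:ℝ) * α) * mA n - mA n * mA q| ≤ α ^ (q-n-1) := by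
      have h3 : ((k:ℝ) * α) * mA n - mA n * mA q = mA n * ((k:ℝ) * α - mA q) := by ring
      rw [h3, abs_mul, abs_of_nonneg (hmA0 n)]
      have h4 : |(k:ℝ) * α - mA q| ≤ σ * α ^ q := by
        rw [abs_of_nonneg (by linarith [hmA1 q])]
        exact hmA2 q
      calc mA n * |(k:ℝ) * α - mA q| ≤ 1 * (σ * α ^ q) :=
            mul_le_mul (le_trans (hmA1 n) hk1.le) h4 (abs_nonneg _) one_pos.le
        _ ≤ α ^ (q-n-1) := by rw [one_mul]; exact hq1
    have htri : |(volume (A n ∩ A q)).toReal - mA n * mA q| ≤ 3 * α ^ (q-n-1) := by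
      have h1 := hsum1
      rw [hmid] at h1
      have h5 := abs_sub_le ((volume (A n ∩ A q)).toReal) (((k:ℝ) * α) * mA n) (mA n * mA q)
      linarith [h1.trans hrhs]
    refine htri.trans (le_of_eq ?_)
    have hqe : q - n = (q - n - 1) + 1 := by omega
    rw [hqe, pow_succ]
    field_simp
    ring_nf
    congr 1
    omega
  -- probability space
  haveI : IsProbabilityMeasure (volume.restrict (Set.Icc (0:ℝ) 1)) := by
    constructor
    rw [Measure.restrict_apply_univ, Real.volume_Icc]
    norm_num
  have hAsub1 : ∀ n, A n ⊆ Set.Icc (0:ℝ) 1 := by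
    intro n
    refine (hA_sub n).trans ?_
    intro y hy
    exact ⟨hy.1, le_trans hy.2.le (hd1 n)⟩
  have hres : ∀ (B : Set ℝ), MeasurableSet B → B ⊆ Set.Icc (0:ℝ) 1 →
      (volume.restrict (Set.Icc (0:ℝ) 1)) B = volume B := by
    intro B hB hsub
    rw [Measure.restrict_apply hB, Set.inter_eq_left.2 hsub]
  have hslln := slln_aux (volume.restrict (Set.Icc (0:ℝ) 1)) A measA mA hmA0
    (fun n => le_trans (hmA1 n) hk1.le)
    (fun n => by rw [hres (A n) (measA n) (hAsub1 n)]; exact hmAvol n)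
    (3/α) α hα0 hα1 (by rw [le_div_iff₀ hα0]; linarith)
    (fun i j hij => by
      rw [hres _ ((measA i).inter (measA j)) ((Set.inter_subset_left).trans (hAsub1 i))]
      exact hcorr i j hij)
  filter_upwards [hslln] with s hs
  have hces : Tendsto (fun n : ℕ => (∑ j ∈ Finset.range n, mA j) / n) atTop
      (nhds ((k:ℝ) * α)) := by
    rw [← tendsto_sub_nhds_zero_iff]
    refine squeeze_zero_norm' ?_ (tendsto_const_div_atTop_nhds_zero_nat (σ/(1-α)))
    filter_upwards [eventually_ge_atTop 1] with n hn
    have hnp : (0:ℝ) < n := by exact_mod_cast hn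
    have h1 : (∑ j ∈ Finset.range n, mA j) / n - (k:ℝ) * α
        = (∑ j ∈ Finset.range n, (mA j - (k:ℝ) * α)) / n := by
      rw [Finset.sum_sub_distrib, Finset.sum_const, Finset.card_range, nsmul_eq_mul]
      field_simp
    rw [Real.norm_eq_abs, h1, abs_div, abs_of_nonneg hnp.le]
    gcongr
    calc |∑ j ∈ Finset.range n, (mA j - (k:ℝ) * α)|
        ≤ ∑ j ∈ Finset.range n, |mA j - (k:ℝ) * α| := Finset.abs_sum_le_sum_abs _ _
      _ ≤ ∑ j ∈ Finset.range n, σ * α ^ j := by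
          refine Finset.sum_le_sum fun j _ => ?_
          rw [abs_of_nonpos (by linarith [hmA1 j])]
          linarith [hmA2 j]
      _ = σ * ∑ j ∈ Finset.range n, α ^ j := by rw [Finset.mul_sum]
      _ ≤ σ * (1/(1-α)) :=
          mul_le_mul_of_nonneg_left (geom_sum_le_div hα0.le hα1 n) hσ0.le
      _ = σ/(1-α) := by ring
  have hadd := hs.add hces
  rw [zero_add] at hadd
  refine hadd.congr fun n => ?_
  have hset : {j : ℕ | j < n ∧ s ∈ A j}
      = ↑((Finset.range n).filter (fun j => s ∈ A j)) := by
    ext j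
    simp [Finset.mem_filter, Finset.mem_range]
  have hncard : (Set.ncard {j : ℕ | j < n ∧ s ∈ A j} : ℝ)
      = ∑ j ∈ Finset.range n, (A j).indicator (1 : ℝ → ℝ) s := by
    rw [hset, Set.ncard_coe_finset, Finset.card_filter]
    push_cast
    refine Finset.sum_congr rfl fun j _ => ?_
    rw [Set.indicator_apply]
    split_ifs <;> simp
  rw [Finset.sum_sub_distrib, hncard]
  ring
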